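/- Let K₁, K₂, N be closed subspaces of a complex Hilbert space E such that P_{K₁} commutes with P_N and P_{K₂} commutes with P_N. Then (K₁ ⇒ K₂) ⊓ N = ((K₁ ⊓ N) ⇒ (K₂ ⊓ N)) ⊓ N. -/

import Mathlib

variable {E : Type*} [NormedAddCommGroup E] [InnerProductSpace ℂ E] [CompleteSpace E]

/-- Orthogonal projection onto (the topological closure of) a submodule, as a
continuous linear operator on `E`. For a closed subspace `K` this is the
orthogonal projection `P_K` onto `K` itself. -/
noncomputable def proj (K : Submodule ℂ E) : E →L[ℂ] E :=
  K.topologicalClosure.subtypeL.comp K.topologicalClosure.orthogonalProjectionOnto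


/-- The Sasaki arrow `K ⇒ M`. -/
noncomputable def sasaki (K M : Submodule ℂ E) : Submodule ℂ E :=
  Kᗮ ⊔ (K ⊓ M)

lemma proj_mem (K : Submodule ℂ E) (hK : IsClosed (K : Set E)) (x : E) :
    proj K x ∈ K := by
  exact K.topologicalClosure_minimal le_rfl hK
    (Submodule.coe_mem (K.topologicalClosure.orthogonalProjectionOnto x))

lemma sub_proj_mem (K : Submodule ℂ E) (hK : IsClosed (K : Set E)) (x : E) :
    x - proj K x ∈ Kᗮ := by
  exact Submodule.orthogonal_le K.le_topologicalClosure
    (Submodule.sub_starProjection_mem_orthogonal x)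

lemma proj_eq_self (K : Submodule ℂ E) (hK : IsClosed (K : Set E)) {x : E} (hx : x ∈ K) :
    proj K x = x := by
  exact Submodule.starProjection_eq_self_iff.2 (K.le_topologicalClosure hx)

lemma proj_eq_zero (K : Submodule ℂ E) (hK : IsClosed (K : Set E)) {x : E}
    (hx : x ∈ Kᗮ) : proj K x = 0 := by
  have : K.topologicalClosure.orthogonalProjectionOnto x = 0 :=
    Submodule.orthogonalProjectionOnto_eq_zero_iff.2
      (Submodule.orthogonal_le (K.topologicalClosure_minimal le_rfl hK) hx)
  simp [proj, this]

lemma proj_unique (K : Submodule ℂ E) (hK : IsClosed (K : Set E)) {x v : E}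
    (hv : v ∈ K) (hxv : x - v ∈ Kᗮ) : proj K x = v := by
  exact Submodule.eq_starProjection_of_mem_orthogonal (K.le_topologicalClosure hv)
    (Submodule.orthogonal_le (K.topologicalClosure_minimal le_rfl hK) hxv)

lemma mem_sasaki_iff (K M : Submodule ℂ E) (hK : IsClosed (K : Set E)) (x : E) :
    x ∈ sasaki K M ↔ proj K x ∈ M := by
  constructor
  · intro hx
    rcases Submodule.mem_sup.mp hx with ⟨a, ha, b, hb, rfl⟩
    rw [map_add, proj_eq_zero K hK ha, proj_eq_self K hK hb.1, zero_add]
    exact hb.2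
  · intro hx
    have : x = (x - proj K x) + proj K x := by abel
    rw [this]
    exact Submodule.add_mem_sup (sub_proj_mem K hK x)
      (Submodule.mem_inf.2 ⟨proj_mem K hK x, hx⟩)

theorem stmt13 (K₁ K₂ N : Submodule ℂ E)
    (hK₁ : IsClosed (K₁ : Set E)) (hK₂ : IsClosed (K₂ : Set E)) (hN : IsClosed (N : Set E))
    (h₁ : proj K₁ ∘L proj N = proj N ∘L proj K₁)
    (h₂ : proj K₂ ∘L proj N = proj N ∘L proj K₂) :
    sasaki K₁ K₂ ⊓ N = sasaki (K₁ ⊓ N) (K₂ ⊓ N) ⊓ N := by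
  have hKN : IsClosed ((K₁ ⊓ N : Submodule ℂ E) : Set E) := by
    rw [Submodule.coe_inf]; exact hK₁.inter hN
  have key : ∀ x ∈ N, proj K₁ x ∈ N := by
    intro x hx
    have hc := DFunLike.congr_fun h₁ x
    simp only [ContinuousLinearMap.comp_apply] at hc
    rw [proj_eq_self N hN hx] at hc
    rw [hc]
    exact proj_mem N hN _
  have projKN : ∀ x ∈ N, proj (K₁ ⊓ N) x = proj K₁ x := by
    intro x hx
    exact proj_unique _ hKN (Submodule.mem_inf.2 ⟨proj_mem K₁ hK₁ x, key x hx⟩)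
      (Submodule.orthogonal_le inf_le_left (sub_proj_mem K₁ hK₁ x))
  ext x
  simp only [Submodule.mem_inf, mem_sasaki_iff K₁ K₂ hK₁,
    mem_sasaki_iff (K₁ ⊓ N) (K₂ ⊓ N) hKN]
  constructor
  · rintro ⟨h, hxN⟩
    exact ⟨by rw [projKN x hxN]; exact Submodule.mem_inf.2 ⟨h, key x hxN⟩, hxN⟩
  · rintro ⟨h, hxN⟩
    rw [projKN x hxN] at h
    exact ⟨(Submodule.mem_inf.1 h).1, hxN⟩
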